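/- For all positive integers a_1,…,a_k, b_1,…,b_l and c_0, c_1,…,c_l, pow(a_1,…,a_k, pow(c_0, c_1,…,c_l), b_1,…,b_l) ≤ pow(a_1,…,a_k, c_0, b_1·c_1, …, b_l·c_l). -/

import Mathlib

namespace HOPDA

/-- Iterated exponentiation `pow` from the paper:
`pow [] = 1`, `pow (m :: l) = (1 + m) ^ pow l - 1`;
in particular `pow [m] = m` and `pow [m₁, m₂] = (1 + m₁) ^ m₂ - 1`. -/
def pow : List ℕ → ℕ
  | [] => 1
  | m :: l => (1 + m) ^ pow l - 1

lemma pow_pos : ∀ l : List ℕ, (∀ x ∈ l, 0 < x) → 1 ≤ pow l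
  | [], _ => le_refl 1
  | m :: l, h => by
    have hm : 0 < m := h m List.mem_cons_self
    have hl : 1 ≤ pow l := pow_pos l (fun x hx => h x (List.mem_cons_of_mem _ hx))
    have : 2 ≤ (1 + m) ^ pow l := by
      calc 2 = 2 ^ 1 := rfl
      _ ≤ (1 + m) ^ pow l := Nat.pow_le_pow_left (by omega) 1 |>.trans
        (Nat.pow_le_pow_right (by omega) hl)
    simp only [pow]
    omega

lemma key_one (a b m : ℕ) (hb : 1 ≤ b) :
    ((1 + a) ^ m - 1) * b ≤ (1 + a * b) ^ m - 1 := by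
  induction m with
  | zero => simp
  | succ m ih =>
    obtain ⟨p, hp⟩ : ∃ p, (1 + a) ^ m = p + 1 :=
      ⟨(1 + a) ^ m - 1, by have := Nat.one_le_pow m (1 + a) (by omega); omega⟩
    obtain ⟨z, hz⟩ : ∃ z, (1 + a * b) ^ m = z + 1 :=
      ⟨(1 + a * b) ^ m - 1, by have := Nat.one_le_pow m (1 + a * b) (by omega); omega⟩
    rw [hp, hz] at ih
    simp only [Nat.add_sub_cancel] at ih
    rw [pow_succ, pow_succ, hp, hz]
    have e1 : (p + 1) * (1 + a) = (p + a * p + a) + 1 := by ring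
    have e2 : (z + 1) * (1 + a * b) = (z + a * b * z + a * b) + 1 := by ring
    rw [e1, e2, Nat.add_sub_cancel, Nat.add_sub_cancel]
    have h3 : a * (p * b) ≤ a * z := Nat.mul_le_mul_left a ih
    have h4 : a * z ≤ a * b * z := by
      calc a * z = a * 1 * z := by ring
        _ ≤ a * b * z := Nat.mul_le_mul_right z (Nat.mul_le_mul_left a hb)
    nlinarith [ih, h3, h4]

lemma key_gen (a b m n : ℕ) (ha : 1 ≤ a) (hb : 1 ≤ b) (hm : 1 ≤ m) :
    ((1 + a) ^ m - 1) * ((1 + b) ^ n - 1) ≤ (1 + a * b) ^ (m * n) - 1 := by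
  induction n with
  | zero => simp
  | succ n ih =>
    obtain ⟨p, hp⟩ : ∃ p, (1 + a) ^ m = p + 1 :=
      ⟨(1 + a) ^ m - 1, by have := Nat.one_le_pow m (1 + a) (by omega); omega⟩
    obtain ⟨q, hq⟩ : ∃ q, (1 + b) ^ n = q + 1 :=
      ⟨(1 + b) ^ n - 1, by have := Nat.one_le_pow n (1 + b) (by omega); omega⟩
    obtain ⟨z, hz⟩ : ∃ z, (1 + a * b) ^ (m * n) = z + 1 :=
      ⟨(1 + a * b) ^ (m * n) - 1, by have := Nat.one_le_pow (m * n) (1 + a * b) (by omega); omega⟩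
    obtain ⟨w, hw⟩ : ∃ w, (1 + a * b) ^ m = w + 1 :=
      ⟨(1 + a * b) ^ m - 1, by have := Nat.one_le_pow m (1 + a * b) (by omega); omega⟩
    have hbw : b ≤ w := by
      have : 1 + b ≤ (1 + a * b) ^ m := by
        calc 1 + b ≤ 1 + a * b := by nlinarith
          _ = (1 + a * b) ^ 1 := (pow_one _).symm
          _ ≤ (1 + a * b) ^ m := Nat.pow_le_pow_right (by omega) hm
      omega
    rw [hp, hq, hz] at ih
    simp only [Nat.add_sub_cancel] at ih
    have t2 := key_one a b m hb
    rw [hp, hw] at t2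
    simp only [Nat.add_sub_cancel] at t2
    have e0 : m * (n + 1) = m * n + m := by ring
    rw [pow_succ, e0, pow_add, hp, hq, hz, hw]
    have e1 : (q + 1) * (1 + b) = (q + b * q + b) + 1 := by ring
    have e2 : (z + 1) * (w + 1) = (z * w + z + w) + 1 := by ring
    rw [e1, e2, Nat.add_sub_cancel, Nat.add_sub_cancel, Nat.add_sub_cancel]
    have h1 : b * (p * q) ≤ b * z := Nat.mul_le_mul_left b ih
    have h2 : b * z ≤ w * z := Nat.mul_le_mul_right z hbw
    nlinarith [ih, t2, h1, h2]

lemma zip_lemma : ∀ (b c : List ℕ), b.length = c.length →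
    (∀ x ∈ b, 0 < x) → (∀ x ∈ c, 0 < x) →
    pow b * pow c ≤ pow (List.zipWith (· * ·) b c)
  | [], [], _, _, _ => by simp [pow]
  | [], c :: cs, h, _, _ => by simp at h
  | b :: bs, [], h, _, _ => by simp at h
  | b :: bs, c :: cs, h, hb, hc => by
    have hb1 : 1 ≤ b := hb b List.mem_cons_self
    have hc1 : 1 ≤ c := hc c List.mem_cons_self
    have hbs : ∀ x ∈ bs, 0 < x := fun x hx => hb x (List.mem_cons_of_mem _ hx)
    have hcs : ∀ x ∈ cs, 0 < x := fun x hx => hc x (List.mem_cons_of_mem _ hx)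
    have ih := zip_lemma bs cs (by simpa using h) hbs hcs
    have hQ : 1 ≤ pow bs := pow_pos bs hbs
    simp only [pow, List.zipWith_cons_cons]
    calc ((1 + b) ^ pow bs - 1) * ((1 + c) ^ pow cs - 1)
        ≤ (1 + b * c) ^ (pow bs * pow cs) - 1 := key_gen b c _ _ hb1 hc1 hQ
      _ ≤ (1 + b * c) ^ pow (List.zipWith (· * ·) bs cs) - 1 :=
        Nat.sub_le_sub_right (Nat.pow_le_pow_right (by omega) ih) 1

lemma mid_lemma (b c : List ℕ) (c0 : ℕ) (hlen : b.length = c.length)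
    (hb : ∀ x ∈ b, 0 < x) (hc : ∀ x ∈ c, 0 < x) (hc0 : 0 < c0) :
    pow (pow (c0 :: c) :: b) ≤ pow (c0 :: List.zipWith (· * ·) b c) := by
  have h1 : 1 ≤ (1 + c0) ^ pow c := Nat.one_le_pow _ _ (by omega)
  simp only [pow]
  rw [show (1 + ((1 + c0) ^ pow c - 1)) = (1 + c0) ^ pow c from by omega, ← pow_mul]
  refine Nat.sub_le_sub_right (Nat.pow_le_pow_right (by omega) ?_) 1
  calc pow c * pow b = pow b * pow c := mul_comm _ _
    _ ≤ pow (List.zipWith (· * ·) b c) := zip_lemma b c hlen hb hc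

lemma append_mono (a : List ℕ) {l1 l2 : List ℕ} (h : pow l1 ≤ pow l2) :
    pow (a ++ l1) ≤ pow (a ++ l2) := by
  induction a with
  | nil => simpa using h
  | cons x a ih =>
    simp only [List.cons_append, pow]
    exact Nat.sub_le_sub_right (Nat.pow_le_pow_right (by omega) ih) 1

/-- For all positive integers `a_1,…,a_k`, `b_1,…,b_l` and
`c_0, c_1,…,c_l`,
`pow(a_1,…,a_k, pow(c_0,c_1,…,c_l), b_1,…,b_l) ≤ pow(a_1,…,a_k, c_0, b_1·c_1,…,b_l·c_l)`. -/
theorem statement12 (a b c : List ℕ) (c0 : ℕ) (hlen : b.length = c.length)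
    (ha : ∀ x ∈ a, 0 < x) (hb : ∀ x ∈ b, 0 < x) (hc : ∀ x ∈ c, 0 < x) (hc0 : 0 < c0) :
    pow (a ++ pow (c0 :: c) :: b) ≤ pow (a ++ c0 :: List.zipWith (· * ·) b c) := by
  exact append_mono a (mid_lemma b c c0 hlen hb hc hc0)

end HOPDA
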